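/- For r,s ≥ 3 both even, adim_1(C_r □ C_s) = 1, while if r and s are not both even then adim_1(C_r □ C_s) = 2, with a minimum 1-ARS given by two adjacent vertices {(u_0,v_0),(u_0,v_1)} when s is odd. -/

import Mathlib

open SimpleGraph

/-- Two vertices have the same distances to every vertex of `S`. -/
def sameDists {V : Type*} (G : SimpleGraph V) (S : Set V) (x y : V) : Prop :=
  ∀ z ∈ S, G.dist x z = G.dist y z

/-- The equivalence class (outside `S`) of `x` under the equal-distance relation `R_S`. -/
def cls {V : Type*} (G : SimpleGraph V) (S : Set V) (x : V) : Set V :=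
  {y | y ∉ S ∧ sameDists G S x y}

/-- `S` is a `k`-antiresolving set: `S` is nonempty, does not cover `V`, and the minimum
size of an equivalence class of `R_S` on `V ∖ S` equals `k`. -/
def IsKARS {V : Type*} (G : SimpleGraph V) (k : ℕ) (S : Set V) : Prop :=
  S.Nonempty ∧ Sᶜ.Nonempty ∧
    (∀ x ∉ S, k ≤ (cls G S x).ncard) ∧ ∃ x ∉ S, (cls G S x).ncard = k

/-- The `k`-metric antidimension: the smallest cardinality of a `k`-antiresolving set,
`⊤` (i.e. `+∞`) if none exists. -/
noncomputable def adim {V : Type*} (G : SimpleGraph V) (k : ℕ) : ℕ∞ :=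
  sInf ((fun S => (S.ncard : ℕ∞)) '' {S : Set V | IsKARS G k S})

open Fin.CommRing Fin.NatCast Fin.IntCast


lemma fin_one_val {n : ℕ} [NeZero n] (hn : 2 ≤ n) : ((1 : Fin n) : ℕ) = 1 := by
  rw [Fin.val_one' n]
  exact Nat.mod_eq_of_lt (by omega)

lemma cycle_walk_exists (n : ℕ) [NeZero n] (hn : 2 ≤ n) (u : Fin n) (k : ℕ) :
    ∃ w : (cycleGraph n).Walk u (u + (k : Fin n)), w.length = k := by
  induction k with
  | zero => exact ⟨Walk.nil.copy rfl (by rw [Nat.cast_zero, add_zero]), by simp⟩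
  | succ k ih =>
    obtain ⟨w, hw⟩ := ih
    have hadj : (cycleGraph n).Adj (u + (k : Fin n)) (u + ((k+1 : ℕ) : Fin n)) := by
      rw [cycleGraph_adj']
      right
      have h1 : (u + ((k+1 : ℕ) : Fin n)) - (u + (k : Fin n)) = 1 := by
        push_cast; ring
      rw [h1, fin_one_val hn]
    exact ⟨w.concat hadj, by simp [hw]⟩

lemma cycle_walk_int (n : ℕ) [NeZero n] {u v : Fin n} (w : (cycleGraph n).Walk u v) :
    ∃ m : ℤ, m.natAbs ≤ w.length ∧ (m : Fin n) = v - u := by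
  induction w with
  | nil => exact ⟨0, by simp⟩
  | @cons a b c h w ih =>
    obtain ⟨m, hm, hmv⟩ := ih
    rw [cycleGraph_adj'] at h
    have hlen : (Walk.cons ‹(cycleGraph n).Adj a b› w).length = w.length + 1 := Walk.length_cons _ _
    rcases h with h | h
    · have hab : a - b = 1 := by ext; rw [h]; exact (fin_one_val (by omega)).symm
      refine ⟨m - 1, by rw [hlen]; omega, ?_⟩
      push_cast
      rw [hmv]
      linear_combination hab
    · have hab : b - a = 1 := by ext; rw [h]; exact (fin_one_val (by omega)).symm
      refine ⟨m + 1, by rw [hlen]; omega, ?_⟩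
      push_cast
      rw [hmv]
      linear_combination -hab

lemma fin_sub_val (n : ℕ) [NeZero n] (u v : Fin n) :
    (u - v).val = (n - (v - u).val) % n := by
  rw [show u - v = -(v - u) by ring, Fin.coe_neg]

lemma cycle_dist (n : ℕ) [NeZero n] (hn : 2 ≤ n) (u v : Fin n) :
    (cycleGraph n).dist u v = min (v - u).val (n - (v - u).val) := by
  set e := (v - u).val with he
  have hev : e < n := (v - u).isLt
  rcases Nat.eq_zero_or_pos e with h0 | hpos
  · have h1 : v - u = 0 := Fin.ext (h0.trans rfl)
    have huv : v = u := sub_eq_zero.mp h1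
    rw [huv, SimpleGraph.dist_self]
    omega
  · have hsub : (u - v).val = n - e := by
      rw [fin_sub_val, ← he, Nat.mod_eq_of_lt (by omega)]
    apply le_antisymm
    · apply le_min
      · obtain ⟨w, hw⟩ := cycle_walk_exists n hn u e
        have : u + (e : Fin n) = v := by
          rw [he, Fin.cast_val_eq_self]; ring
        rw [← this]
        exact (dist_le w).trans hw.le
      · obtain ⟨w, hw⟩ := cycle_walk_exists n hn v ((u - v).val)
        have : v + (((u - v).val : ℕ) : Fin n) = u := by
          rw [Fin.cast_val_eq_self]; ring
        rw [SimpleGraph.dist_comm, ← this, ← hsub]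
        exact (dist_le w).trans hw.le
    · obtain ⟨w, hw⟩ := (cycleGraph_preconnected u v).exists_walk_length_eq_dist
      obtain ⟨m, hm, hmv⟩ := cycle_walk_int n w
      rw [← hw]
      rcases le_or_gt 0 m with hm0 | hm0
      · have : ((m.natAbs : ℕ) : Fin n) = v - u := by
          rw [← Int.cast_natCast (R := Fin n), Int.natAbs_of_nonneg hm0, hmv]
        have : e = m.natAbs % n := by rw [he, ← this, Fin.val_natCast]
        have := Nat.mod_le m.natAbs n
        omega
      · have : ((m.natAbs : ℕ) : Fin n) = u - v := by
          have h1 : (m.natAbs : ℤ) = -m := by omega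
          rw [← Int.cast_natCast (R := Fin n), h1, Int.cast_neg, hmv]
          ring
        have : (u - v).val = m.natAbs % n := by rw [← this, Fin.val_natCast]
        have := Nat.mod_le m.natAbs n
        omega

lemma boxProd_dist_eq {α β : Type*} {G : SimpleGraph α} {H : SimpleGraph β}
    (hG : G.Connected) (hH : H.Connected) (x y : α × β) :
    (G □ H).dist x y = G.dist x.1 y.1 + H.dist x.2 y.2 := by
  apply le_antisymm
  · obtain ⟨w1, hw1⟩ := (hG x.1 y.1).exists_walk_length_eq_dist
    obtain ⟨w2, hw2⟩ := (hH x.2 y.2).exists_walk_length_eq_dist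
    have := dist_le ((w1.boxProdLeft H x.2).append (w2.boxProdRight G y.1))
    rw [Walk.length_append] at this
    have l1 : (w1.boxProdLeft H x.2).length = w1.length := Walk.length_map _ _
    have l2 : (w2.boxProdRight G y.1).length = w2.length := Walk.length_map _ _
    rw [l1, l2, hw1, hw2] at this
    exact this
  · obtain ⟨w, hw⟩ := ((hG.boxProd hH) x y).exists_walk_length_eq_dist
    rw [← hw]
    clear hw
    induction w with
    | nil => simp
    | @cons a b c h w ih =>
      rw [Walk.length_cons]
      rcases h with ⟨h1, h2⟩ | ⟨h1, h2⟩
      · have t1 : G.dist a.1 c.1 ≤ 1 + G.dist b.1 c.1 := by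
          refine (hG.dist_triangle (v := b.1)).trans ?_
          have : G.dist a.1 b.1 ≤ 1 := by
            simpa using dist_le (Walk.cons h1 Walk.nil)
          omega
        have t2 : H.dist a.2 c.2 = H.dist b.2 c.2 := by rw [h2]
        omega
      · have t1 : H.dist a.2 c.2 ≤ 1 + H.dist b.2 c.2 := by
          refine (hH.dist_triangle (v := b.2)).trans ?_
          have : H.dist a.2 b.2 ≤ 1 := by
            simpa using dist_le (Walk.cons h1 Walk.nil)
          omega
        have t2 : G.dist a.1 c.1 = G.dist b.1 c.1 := by rw [h2]
        omega

lemma cycle_connected' (n : ℕ) (hn : 1 ≤ n) : (cycleGraph n).Connected := by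
  obtain ⟨m, rfl⟩ : ∃ m, n = m + 1 := ⟨n - 1, by omega⟩
  exact cycleGraph_connected

lemma mod_cases' (x n : ℕ) (h : x < 2 * n) :
    (x < n ∧ x % n = x) ∨ (n ≤ x ∧ x % n = x - n) := by
  rcases Nat.lt_or_ge x n with h1 | h1
  · exact Or.inl ⟨h1, Nat.mod_eq_of_lt h1⟩
  · exact Or.inr ⟨h1, by rw [Nat.mod_eq_sub_mod h1, Nat.mod_eq_of_lt (by omega)]⟩

lemma fin_sub_val' {n : ℕ} (u v : Fin n) : (u - v).val = ((n - v.val) + u.val) % n := by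
  rw [Fin.sub_def]

lemma cc_dist (r s : ℕ) [NeZero r] [NeZero s] (hr : 2 ≤ r) (hs : 2 ≤ s)
    (x y : Fin r × Fin s) :
    (cycleGraph r □ cycleGraph s).dist x y =
      min (y.1 - x.1).val (r - (y.1 - x.1).val) + min (y.2 - x.2).val (s - (y.2 - x.2).val) := by
  rw [boxProd_dist_eq (cycle_connected' r (by omega)) (cycle_connected' s (by omega)),
    cycle_dist r hr, cycle_dist s hs]

lemma mem_cls_self {V : Type*} (G : SimpleGraph V) (S : Set V) {x : V} (hx : x ∉ S) :
    x ∈ cls G S x := ⟨hx, fun _ _ => rfl⟩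

lemma one_le_ncard_cls {V : Type*} [Finite V] (G : SimpleGraph V) (S : Set V) {x : V}
    (hx : x ∉ S) : 1 ≤ (cls G S x).ncard :=
  (Set.ncard_pos (Set.toFinite _)).mpr ⟨x, mem_cls_self G S hx⟩

lemma sphere_candidate (r s : ℕ) [NeZero r] [NeZero s] (hr : 2 ≤ r) (hs : 2 ≤ s)
    (w x : Fin r × Fin s) (i' j' : ℕ) (hi' : i' < r) (hj' : j' < s)
    (hne1 : i' ≠ (w.1 - x.1).val ∨ j' ≠ (w.2 - x.2).val)
    (hne2 : ¬(i' = 0 ∧ j' = 0))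
    (hdist : min i' (r - i') + min j' (s - j') =
      min (w.1 - x.1).val (r - (w.1 - x.1).val) +
        min (w.2 - x.2).val (s - (w.2 - x.2).val)) :
    ∃ y : Fin r × Fin s, y ≠ x ∧ y ≠ w ∧
      (cycleGraph r □ cycleGraph s).dist y w = (cycleGraph r □ cycleGraph s).dist x w := by
  refine ⟨(w.1 - (i' : Fin r), w.2 - (j' : Fin s)), ?_, ?_, ?_⟩
  · intro h
    obtain ⟨h1, h2⟩ := Prod.ext_iff.mp h
    rcases hne1 with hne | hne
    · apply hne
      have : (i' : Fin r) = w.1 - x.1 := by rw [← h1]; ring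
      rw [← this, Fin.val_natCast, Nat.mod_eq_of_lt hi']
    · apply hne
      have : (j' : Fin s) = w.2 - x.2 := by rw [← h2]; ring
      rw [← this, Fin.val_natCast, Nat.mod_eq_of_lt hj']
  · intro h
    obtain ⟨h1, h2⟩ := Prod.ext_iff.mp h
    apply hne2
    have e1 : (i' : Fin r) = 0 := sub_eq_self.mp h1
    have e2 : (j' : Fin s) = 0 := sub_eq_self.mp h2
    constructor
    · have := congrArg Fin.val e1
      rwa [Fin.val_natCast, Nat.mod_eq_of_lt hi', Fin.val_zero] at this
    · have := congrArg Fin.val e2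
      rwa [Fin.val_natCast, Nat.mod_eq_of_lt hj', Fin.val_zero] at this
  · rw [cc_dist r s hr hs, cc_dist r s hr hs]
    have e1 : w.1 - (w.1 - (i' : Fin r)) = (i' : Fin r) := by ring
    have e2 : w.2 - (w.2 - (j' : Fin s)) = (j' : Fin s) := by ring
    simp only [e1, e2, Fin.val_natCast, Nat.mod_eq_of_lt hi', Nat.mod_eq_of_lt hj']
    exact hdist

lemma sphere_two (r s : ℕ) [NeZero r] [NeZero s] (hr : 3 ≤ r) (hs : 3 ≤ s)
    (hne : ¬(Even r ∧ Even s)) (w x : Fin r × Fin s) (hx : x ≠ w) :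
    ∃ y : Fin r × Fin s, y ≠ x ∧ y ≠ w ∧
      (cycleGraph r □ cycleGraph s).dist y w = (cycleGraph r □ cycleGraph s).dist x w := by
  set i := (w.1 - x.1).val with hi
  set j := (w.2 - x.2).val with hj
  have hil : i < r := (w.1 - x.1).isLt
  have hjl : j < s := (w.2 - x.2).isLt
  have hij : ¬(i = 0 ∧ j = 0) := by
    rintro ⟨h1, h2⟩
    apply hx
    have e1 : w.1 - x.1 = 0 := Fin.ext (by rw [← hi, h1, Fin.val_zero])
    have e2 : w.2 - x.2 = 0 := Fin.ext (by rw [← hj, h2, Fin.val_zero])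
    exact Prod.ext (sub_eq_zero.mp e1).symm (sub_eq_zero.mp e2).symm
  have hpar : r % 2 = 1 ∨ s % 2 = 1 := by
    rcases Nat.even_or_odd r with h | h
    · rcases Nat.even_or_odd s with h2 | h2
      · exact absurd ⟨h, h2⟩ hne
      · exact Or.inr (Nat.odd_iff.mp h2)
    · exact Or.inl (Nat.odd_iff.mp h)
  have hcase : (i ≠ 0 ∧ 2 * i ≠ r) ∨ (j ≠ 0 ∧ 2 * j ≠ s) ∨
      (i = 0 ∧ 2 * j = s ∧ j ≠ 0) ∨ (j = 0 ∧ 2 * i = r ∧ i ≠ 0) := by omega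
  rcases hcase with ⟨h1, h2⟩ | ⟨h1, h2⟩ | ⟨h1, h2, h3⟩ | ⟨h1, h2, h3⟩
  · exact sphere_candidate r s (by omega) (by omega) w x (r - i) j (by omega) hjl
      (Or.inl (by omega)) (by omega) (by rw [← hi, ← hj]; omega)
  · exact sphere_candidate r s (by omega) (by omega) w x i (s - j) hil (by omega)
      (Or.inr (by omega)) (by omega) (by rw [← hi, ← hj]; omega)
  · exact sphere_candidate r s (by omega) (by omega) w x 1 (j - 1) (by omega) (by omega)
      (Or.inl (by omega)) (by omega) (by rw [← hi, ← hj]; omega)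
  · exact sphere_candidate r s (by omega) (by omega) w x (i - 1) 1 (by omega) (by omega)
      (Or.inr (by omega)) (by omega) (by rw [← hi, ← hj]; omega)

lemma fin_zero_sub_val {n : ℕ} [NeZero n] (v : Fin n) :
    ((0 : Fin n) - v).val = (n - v.val) % n := by
  rw [zero_sub, Fin.coe_neg]

lemma fin_one_sub_val {n : ℕ} [NeZero n] (hn : 2 ≤ n) (v : Fin n) :
    ((1 : Fin n) - v).val = ((n - v.val) + 1) % n := by
  rw [fin_sub_val', fin_one_val hn]

lemma ars_even (r s : ℕ) [NeZero r] [NeZero s] (hr : 3 ≤ r) (hs : 3 ≤ s)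
    (her : r % 2 = 0) (hes : s % 2 = 0) :
    IsKARS (cycleGraph r □ cycleGraph s) 1 {((0 : Fin r), (0 : Fin s))} := by
  have hav1 : (((r/2 : ℕ) : Fin r)).val = r / 2 := by
    rw [Fin.val_natCast]; exact Nat.mod_eq_of_lt (by omega)
  have hav2 : (((s/2 : ℕ) : Fin s)).val = s / 2 := by
    rw [Fin.val_natCast]; exact Nat.mod_eq_of_lt (by omega)
  have haS : (((r/2:ℕ):Fin r), ((s/2:ℕ):Fin s)) ∉
      ({((0:Fin r),(0:Fin s))} : Set (Fin r × Fin s)) := by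
    intro h
    have h2 := congrArg Fin.val (congrArg Prod.fst (Set.mem_singleton_iff.mp h))
    rw [hav1, Fin.val_zero] at h2
    omega
  refine ⟨⟨_, rfl⟩, ⟨_, haS⟩, fun x hx => one_le_ncard_cls _ _ hx, ⟨_, haS, ?_⟩⟩
  have hcls : cls (cycleGraph r □ cycleGraph s) {((0:Fin r),(0:Fin s))}
      (((r/2:ℕ):Fin r), ((s/2:ℕ):Fin s)) = {(((r/2:ℕ):Fin r), ((s/2:ℕ):Fin s))} := by
    apply Set.eq_singleton_iff_unique_mem.mpr
    refine ⟨mem_cls_self _ _ haS, ?_⟩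
    rintro y ⟨hyS, hsd⟩
    have hd := hsd _ rfl
    rw [cc_dist r s (by omega) (by omega), cc_dist r s (by omega) (by omega)] at hd
    simp only [fin_zero_sub_val] at hd
    have h1l : y.1.val < r := y.1.isLt
    have h2l : y.2.val < s := y.2.isLt
    have m1 := mod_cases' (r - y.1.val) r (by omega)
    have m2 := mod_cases' (s - y.2.val) s (by omega)
    have m3 := mod_cases' (r - (((r/2:ℕ):Fin r)).val) r (by omega)
    have m4 := mod_cases' (s - (((s/2:ℕ):Fin s)).val) s (by omega)
    have : y.1.val = r/2 ∧ y.2.val = s/2 := by rw [hav1] at m3 hd; rw [hav2] at m4 hd; omega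
    exact Prod.ext (Fin.ext (by rw [hav1]; exact this.1)) (Fin.ext (by rw [hav2]; exact this.2))
  rw [hcls, Set.ncard_singleton]

lemma two_le_ncard_cls (r s : ℕ) [NeZero r] [NeZero s] (hr : 3 ≤ r) (hs : 3 ≤ s)
    (hne : ¬(Even r ∧ Even s)) (w x : Fin r × Fin s) (hx : x ∉ ({w} : Set (Fin r × Fin s))) :
    2 ≤ (cls (cycleGraph r □ cycleGraph s) {w} x).ncard := by
  have hxw : x ≠ w := by simpa using hx
  obtain ⟨y, hyx, hyw, hyd⟩ := sphere_two r s hr hs hne w x hxw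
  have hsub : ({x, y} : Set (Fin r × Fin s)) ⊆ cls (cycleGraph r □ cycleGraph s) {w} x := by
    rintro z (rfl | rfl)
    · exact mem_cls_self _ _ hx
    · refine ⟨by simpa using hyw, ?_⟩
      rintro z' rfl
      exact hyd.symm
  calc 2 = ({x, y} : Set (Fin r × Fin s)).ncard := (Set.ncard_pair (Ne.symm hyx)).symm
    _ ≤ _ := Set.ncard_le_ncard hsub (Set.toFinite _)

lemma no_singleton (r s : ℕ) [NeZero r] [NeZero s] (hr : 3 ≤ r) (hs : 3 ≤ s)
    (hne : ¬(Even r ∧ Even s)) (w : Fin r × Fin s) :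
    ¬ IsKARS (cycleGraph r □ cycleGraph s) 1 {w} := by
  rintro ⟨-, -, -, x, hx, h1⟩
  have := two_le_ncard_cls r s hr hs hne w x hx
  omega


lemma min_neg_mod (n t : ℕ) (h : t < n) :
    min ((n - t) % n) (n - (n - t) % n) = min t (n - t) := by
  have := mod_cases' (n - t) n (by omega)
  omega

lemma g_form (n t : ℕ) (hn : 3 ≤ n) (h : t < n) :
    (t = 0 ∧ min (((n - t) + 1) % n) (n - ((n - t) + 1) % n) = 1) ∨
    (1 ≤ t ∧ min (((n - t) + 1) % n) (n - ((n - t) + 1) % n) = min (t - 1) (n - t + 1)) := by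
  have := mod_cases' ((n - t) + 1) n (by omega)
  omega

set_option maxHeartbeats 2000000 in
lemma ars_pair_s (r s : ℕ) [NeZero r] [NeZero s] (hr : 3 ≤ r) (hs : 3 ≤ s) (hso : s % 2 = 1) :
    IsKARS (cycleGraph r □ cycleGraph s) 1
      {((0:Fin r),(0:Fin s)), ((0:Fin r),(1:Fin s))} := by
  have h1v : ((1 : Fin s)).val = 1 := fin_one_val (by omega)
  have hkv : ((((s+1)/2 : ℕ) : Fin s)).val = (s+1)/2 := by
    rw [Fin.val_natCast]; exact Nat.mod_eq_of_lt (by omega)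
  have hxS : ((0:Fin r), (((s+1)/2 : ℕ) : Fin s)) ∉
      ({((0:Fin r),(0:Fin s)), ((0:Fin r),(1:Fin s))} : Set (Fin r × Fin s)) := by
    rintro (h | h) <;>
    · have h2 := congrArg Fin.val (congrArg Prod.snd h)
      simp only [hkv, Fin.val_zero, h1v] at h2
      omega
  refine ⟨⟨_, Or.inl rfl⟩, ⟨_, hxS⟩, fun x hx => one_le_ncard_cls _ _ hx, _, hxS, ?_⟩
  have hcls : cls (cycleGraph r □ cycleGraph s)
      {((0:Fin r),(0:Fin s)), ((0:Fin r),(1:Fin s))} ((0:Fin r), (((s+1)/2 : ℕ) : Fin s)) =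
      {((0:Fin r), (((s+1)/2 : ℕ) : Fin s))} := by
    apply Set.eq_singleton_iff_unique_mem.mpr
    refine ⟨mem_cls_self _ _ hxS, ?_⟩
    rintro y ⟨hyS, hsd⟩
    have hd0 := hsd _ (Or.inl rfl)
    have hd1 := hsd _ (Or.inr rfl)
    rw [cc_dist r s (by omega) (by omega), cc_dist r s (by omega) (by omega)] at hd0 hd1
    simp only [fin_zero_sub_val, fin_one_sub_val (show 2 ≤ s by omega), Fin.val_zero,
      hkv] at hd0 hd1
    have h1l : y.1.val < r := y.1.isLt
    have h2l : y.2.val < s := y.2.isLt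
    rw [min_neg_mod r 0 (by omega), min_neg_mod s ((s+1)/2) (by omega),
      min_neg_mod r y.1.val h1l, min_neg_mod s y.2.val h2l] at hd0
    rw [min_neg_mod r 0 (by omega), min_neg_mod r y.1.val h1l,
      show (s - (s+1)/2) + 1 = (s+1)/2 by omega,
      Nat.mod_eq_of_lt (show (s+1)/2 < s by omega)] at hd1
    have m3 := g_form s y.2.val hs h2l
    have hy : y.1.val = 0 ∧ y.2.val = (s+1)/2 := by omega
    exact Prod.ext (Fin.ext (by rw [hy.1, Fin.val_zero])) (Fin.ext (by rw [hy.2, hkv]))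
  rw [hcls, Set.ncard_singleton]

set_option maxHeartbeats 2000000 in
lemma ars_pair_r (r s : ℕ) [NeZero r] [NeZero s] (hr : 3 ≤ r) (hs : 3 ≤ s) (hro : r % 2 = 1) :
    IsKARS (cycleGraph r □ cycleGraph s) 1
      {((0:Fin r),(0:Fin s)), ((1:Fin r),(0:Fin s))} := by
  have h1v : ((1 : Fin r)).val = 1 := fin_one_val (by omega)
  have hkv : ((((r+1)/2 : ℕ) : Fin r)).val = (r+1)/2 := by
    rw [Fin.val_natCast]; exact Nat.mod_eq_of_lt (by omega)
  have hxS : ((((r+1)/2 : ℕ) : Fin r), (0:Fin s)) ∉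
      ({((0:Fin r),(0:Fin s)), ((1:Fin r),(0:Fin s))} : Set (Fin r × Fin s)) := by
    rintro (h | h) <;>
    · have h2 := congrArg Fin.val (congrArg Prod.fst h)
      simp only [hkv, Fin.val_zero, h1v] at h2
      omega
  refine ⟨⟨_, Or.inl rfl⟩, ⟨_, hxS⟩, fun x hx => one_le_ncard_cls _ _ hx, _, hxS, ?_⟩
  have hcls : cls (cycleGraph r □ cycleGraph s)
      {((0:Fin r),(0:Fin s)), ((1:Fin r),(0:Fin s))} ((((r+1)/2 : ℕ) : Fin r), (0:Fin s)) =
      {((((r+1)/2 : ℕ) : Fin r), (0:Fin s))} := by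
    apply Set.eq_singleton_iff_unique_mem.mpr
    refine ⟨mem_cls_self _ _ hxS, ?_⟩
    rintro y ⟨hyS, hsd⟩
    have hd0 := hsd _ (Or.inl rfl)
    have hd1 := hsd _ (Or.inr rfl)
    rw [cc_dist r s (by omega) (by omega), cc_dist r s (by omega) (by omega)] at hd0 hd1
    simp only [fin_zero_sub_val, fin_one_sub_val (show 2 ≤ r by omega), Fin.val_zero,
      hkv] at hd0 hd1
    have h1l : y.1.val < r := y.1.isLt
    have h2l : y.2.val < s := y.2.isLt
    rw [min_neg_mod s 0 (by omega), min_neg_mod r ((r+1)/2) (by omega),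
      min_neg_mod r y.1.val h1l, min_neg_mod s y.2.val h2l] at hd0
    rw [min_neg_mod s 0 (by omega), min_neg_mod s y.2.val h2l,
      show (r - (r+1)/2) + 1 = (r+1)/2 by omega,
      Nat.mod_eq_of_lt (show (r+1)/2 < r by omega)] at hd1
    have m3 := g_form r y.1.val hr h1l
    have hy : y.1.val = (r+1)/2 ∧ y.2.val = 0 := by omega
    exact Prod.ext (Fin.ext (by rw [hy.1, hkv])) (Fin.ext (by rw [hy.2, Fin.val_zero]))
  rw [hcls, Set.ncard_singleton]

/-- For `r, s ≥ 3`: if `r, s` are both even then `adim_1(C_r □ C_s) = 1`; if not both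
even then `adim_1(C_r □ C_s) = 2`, with the two adjacent vertices
`{(u_0,v_0), (u_0,v_1)}` a minimum 1-ARS when `s` is odd. -/
theorem stmt9 (r s : ℕ) (hr : 3 ≤ r) (hs : 3 ≤ s) :
    (Even r → Even s → adim ((cycleGraph r).boxProd (cycleGraph s)) 1 = 1) ∧
    (¬(Even r ∧ Even s) →
      adim ((cycleGraph r).boxProd (cycleGraph s)) 1 = 2 ∧
      (Odd s → IsKARS ((cycleGraph r).boxProd (cycleGraph s)) 1
        ({(⟨0, by omega⟩, ⟨0, by omega⟩), (⟨0, by omega⟩, ⟨1, by omega⟩)} :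
          Set (Fin r × Fin s)))) := by
  haveI : NeZero r := ⟨by omega⟩
  haveI : NeZero s := ⟨by omega⟩
  constructor
  · intro her hes
    apply le_antisymm
    · refine sInf_le ⟨{((0:Fin r),(0:Fin s))},
        ars_even r s hr hs (Nat.even_iff.mp her) (Nat.even_iff.mp hes), ?_⟩
      simp
    · apply le_sInf
      rintro b ⟨S, hS, rfl⟩
      have h1 : 1 ≤ S.ncard := (Set.ncard_pos (Set.toFinite S)).mpr hS.1
      show (1 : ℕ∞) ≤ (S.ncard : ℕ∞)
      exact_mod_cast h1
  · intro hne
    constructor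
    · apply le_antisymm
      · rcases Nat.even_or_odd s with hse | hso
        · have hro : r % 2 = 1 := by
            rcases Nat.even_or_odd r with h | h
            · exact absurd ⟨h, hse⟩ hne
            · exact Nat.odd_iff.mp h
          refine sInf_le ⟨_, ars_pair_r r s hr hs hro, ?_⟩
          have hne2 : ((0:Fin r),(0:Fin s)) ≠ ((1:Fin r),(0:Fin s)) := by
            intro h
            have h2 := congrArg Fin.val (congrArg Prod.fst h)
            rw [Fin.val_zero, fin_one_val (show 2 ≤ r by omega)] at h2
            omega
          show ((({((0:Fin r),(0:Fin s)), ((1:Fin r),(0:Fin s))} : Set (Fin r × Fin s)).ncard : ℕ∞)) = 2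
          rw [Set.ncard_pair hne2]
          rfl
        · refine sInf_le ⟨_, ars_pair_s r s hr hs (Nat.odd_iff.mp hso), ?_⟩
          have hne2 : ((0:Fin r),(0:Fin s)) ≠ ((0:Fin r),(1:Fin s)) := by
            intro h
            have h2 := congrArg Fin.val (congrArg Prod.snd h)
            rw [Fin.val_zero, fin_one_val (show 2 ≤ s by omega)] at h2
            omega
          show ((({((0:Fin r),(0:Fin s)), ((0:Fin r),(1:Fin s))} : Set (Fin r × Fin s)).ncard : ℕ∞)) = 2
          rw [Set.ncard_pair hne2]
          rfl
      · apply le_sInf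
        rintro b ⟨S, hS, rfl⟩
        have h1 : 1 ≤ S.ncard := (Set.ncard_pos (Set.toFinite S)).mpr hS.1
        have h2 : S.ncard ≠ 1 := by
          intro h
          obtain ⟨w, rfl⟩ := Set.ncard_eq_one.mp h
          exact no_singleton r s hr hs hne w hS
        have h3 : 2 ≤ S.ncard := by omega
        show (2 : ℕ∞) ≤ (S.ncard : ℕ∞)
        exact_mod_cast h3
    · intro hso
      have e0r : (⟨0, by omega⟩ : Fin r) = 0 := Fin.ext (Fin.val_zero r).symm
      have e0s : (⟨0, by omega⟩ : Fin s) = 0 := Fin.ext (Fin.val_zero s).symm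
      have e1s : (⟨1, by omega⟩ : Fin s) = 1 :=
        Fin.ext (fin_one_val (show 2 ≤ s by omega)).symm
      rw [e0r, e0s, e1s]
      exact ars_pair_s r s hr hs (Nat.odd_iff.mp hso)
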